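/- Define, for s > 0, h(s) = −1/s² + (1 − s²/2)·log s + (1 + 1/s)³(s² − 10s + 1)·log(1+s) + (1/2)(1 + 4/s)^{3/2}(s² − 20s + 12)·log((√(4+s) − √s)/(√(4+s) + √s)). Then as s → 0⁺, h(s) = −111/(2s) + O(log s); in particular s·h(s) → −111/2 as s → 0⁺. -/

import Mathlib

open Filter Topology Asymptotics

/-- The one-loop gluon-loop vacuum polarization function of the Curci–Ferrari model. -/
noncomputable def gluonLoopH (s : ℝ) : ℝ :=
  -1 / s ^ 2 + (1 - s ^ 2 / 2) * Real.log s
    + (1 + 1 / s) ^ 3 * (s ^ 2 - 10 * s + 1) * Real.log (1 + s)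
    + (1 / 2) * (1 + 4 / s) ^ ((3 : ℝ) / 2) * (s ^ 2 - 20 * s + 12) *
        Real.log ((Real.sqrt (4 + s) - Real.sqrt s) / (Real.sqrt (4 + s) + Real.sqrt s))

lemma aux_log_lower {s : ℝ} (hs : 0 ≤ s) : s - s^2/2 ≤ Real.log (1+s) := by
  have hmono : MonotoneOn (fun x : ℝ => Real.log (1+x) - (x - x^2/2)) (Set.Ici 0) := by
    apply monotoneOn_of_hasDerivWithinAt_nonneg (convex_Ici 0)
      (f' := fun x => 1/(1+x) - (1 - x))
    · apply ContinuousOn.sub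
      · apply ContinuousOn.log (by fun_prop)
        intro x hx
        have : (0:ℝ) ≤ x := hx
        intro h; linarith
      · fun_prop
    · intro x hx
      rw [interior_Ici] at hx
      have hx0 : (0:ℝ) < x := hx
      have h1 : (0:ℝ) < 1 + x := by linarith
      have l1 : HasDerivAt (fun y : ℝ => 1 + y) 1 x := by
        simpa using (hasDerivAt_id x).const_add 1
      have l2 := l1.log (ne_of_gt h1)
      have l3 : HasDerivAt (fun y : ℝ => y - y^2/2) (1 - x) x := by
        have h4 := (hasDerivAt_pow 2 x).div_const 2
        have := (hasDerivAt_id x).sub h4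
        simpa [Pi.sub_def] using this
      have := l2.sub l3
      simpa [Pi.sub_def] using this.hasDerivWithinAt
    · intro x hx
      rw [interior_Ici] at hx
      have hx0 : (0:ℝ) < x := hx
      have h1 : (0:ℝ) < 1 + x := by linarith
      have : 1/(1+x) - (1 - x) = x^2/(1+x) := by field_simp; ring
      rw [this]; positivity
  have := hmono Set.self_mem_Ici hs hs
  simpa using this


lemma aux_log_upper {s : ℝ} (hs : 0 ≤ s) : Real.log (1+s) ≤ s - s^2/2 + s^3/3 := by
  have hmono : MonotoneOn (fun x : ℝ => (x - x^2/2 + x^3/3) - Real.log (1+x)) (Set.Ici 0) := by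
    apply monotoneOn_of_hasDerivWithinAt_nonneg (convex_Ici 0)
      (f' := fun x => (1 - x + x^2) - 1/(1+x))
    · apply ContinuousOn.sub
      · fun_prop
      · apply ContinuousOn.log (by fun_prop)
        intro x hx
        have : (0:ℝ) ≤ x := hx
        intro h; linarith
    · intro x hx
      rw [interior_Ici] at hx
      have hx0 : (0:ℝ) < x := hx
      have h1 : (0:ℝ) < 1 + x := by linarith
      have l1 : HasDerivAt (fun y : ℝ => 1 + y) 1 x := by
        simpa using (hasDerivAt_id x).const_add 1
      have l2 := l1.log (ne_of_gt h1)
      have l3 : HasDerivAt (fun y : ℝ => y - y^2/2 + y^3/3) (1 - x + x^2) x := by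
        have h4 := (hasDerivAt_pow 2 x).div_const 2
        have h5 := (hasDerivAt_pow 3 x).div_const 3
        have := ((hasDerivAt_id x).sub h4).add h5
        refine HasDerivAt.congr_deriv this ?_
        push_cast
        ring
      have := l3.sub l2
      simpa [Pi.sub_def] using this.hasDerivWithinAt
    · intro x hx
      rw [interior_Ici] at hx
      have hx0 : (0:ℝ) < x := hx
      have h1 : (0:ℝ) < 1 + x := by linarith
      have : (1 - x + x^2) - 1/(1+x) = x^3/(1+x) := by field_simp; ring
      rw [this]; positivity
  have := hmono Set.self_mem_Ici hs hs
  simp only [Set.mem_Ici] at this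
  have h0 := this
  simp at h0
  linarith [h0]

lemma aux_atanh_lower {u : ℝ} (h0 : 0 ≤ u) (h1 : u ≤ 1/2) :
    2*u + 2*u^3/3 ≤ Real.log (1+u) - Real.log (1-u) := by
  have hmono : MonotoneOn (fun x : ℝ => (Real.log (1+x) - Real.log (1-x)) - (2*x + 2*x^3/3))
      (Set.Icc 0 (1/2)) := by
    apply monotoneOn_of_hasDerivWithinAt_nonneg (convex_Icc 0 (1/2))
      (f' := fun x => (1/(1+x) + 1/(1-x)) - (2 + 2*x^2))
    · apply ContinuousOn.sub
      · apply ContinuousOn.sub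
        · apply ContinuousOn.log (by fun_prop)
          intro x hx
          have := hx.1; intro h; linarith
        · apply ContinuousOn.log (by fun_prop)
          intro x hx
          have := hx.2; intro h
          have : x = 1 := by linarith
          linarith [hx.2]
      · fun_prop
    · intro x hx
      rw [interior_Icc] at hx
      obtain ⟨hxa, hxb⟩ := hx
      have h1p : (0:ℝ) < 1 + x := by linarith
      have h1m : (0:ℝ) < 1 - x := by linarith
      have l1 : HasDerivAt (fun y : ℝ => 1 + y) 1 x := by
        simpa using (hasDerivAt_id x).const_add 1
      have l2 := l1.log (ne_of_gt h1p)
      have l1' : HasDerivAt (fun y : ℝ => 1 - y) (-1) x := by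
        simpa using (hasDerivAt_id x).const_sub 1
      have l2' := l1'.log (ne_of_gt h1m)
      have l3 : HasDerivAt (fun y : ℝ => 2*y + 2*y^3/3) (2 + 2*x^2) x := by
        have h5 := ((hasDerivAt_pow 3 x).const_mul 2).div_const 3
        have := ((hasDerivAt_id x).const_mul 2).add h5
        refine HasDerivAt.congr_deriv this ?_
        push_cast
        ring
      have hd := (l2.sub l2').sub l3
      have heq : 1/(1+x) - (-1)/(1-x) = 1/(1+x) + 1/(1-x) := by ring
      have heq2 : (1/(1+x) + 1/(1-x)) - (2 + 2*x^2) = 1/(1+x) - (-1)/(1-x) - (2 + 2*x^2) := by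
        ring
      rw [heq2]
      exact hd.hasDerivWithinAt
    · intro x hx
      rw [interior_Icc] at hx
      obtain ⟨hxa, hxb⟩ := hx
      have h1p : (0:ℝ) < 1 + x := by linarith
      have h1m : (0:ℝ) < 1 - x := by linarith
      have : (1/(1+x) + 1/(1-x)) - (2 + 2*x^2) = 2*x^4/((1+x)*(1-x)) := by
        field_simp; ring
      rw [this]; positivity
  have := hmono (Set.left_mem_Icc.2 (by norm_num)) ⟨h0, h1⟩ h0
  simpa using this


lemma aux_atanh_upper {u : ℝ} (h0 : 0 ≤ u) (h1 : u ≤ 1/2) :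
    Real.log (1+u) - Real.log (1-u) ≤ 2*u + 2*u^3/3 + u^5 := by
  have hmono : MonotoneOn (fun x : ℝ => (2*x + 2*x^3/3 + x^5) - (Real.log (1+x) - Real.log (1-x)))
      (Set.Icc 0 (1/2)) := by
    apply monotoneOn_of_hasDerivWithinAt_nonneg (convex_Icc 0 (1/2))
      (f' := fun x => (2 + 2*x^2 + 5*x^4) - (1/(1+x) + 1/(1-x)))
    · apply ContinuousOn.sub
      · fun_prop
      · apply ContinuousOn.sub
        · apply ContinuousOn.log (by fun_prop)
          intro x hx
          have := hx.1; intro h; linarith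
        · apply ContinuousOn.log (by fun_prop)
          intro x hx
          have := hx.2; intro h
          have : x = 1 := by linarith
          linarith [hx.2]
    · intro x hx
      rw [interior_Icc] at hx
      obtain ⟨hxa, hxb⟩ := hx
      have h1p : (0:ℝ) < 1 + x := by linarith
      have h1m : (0:ℝ) < 1 - x := by linarith
      have l1 : HasDerivAt (fun y : ℝ => 1 + y) 1 x := by
        simpa using (hasDerivAt_id x).const_add 1
      have l2 := l1.log (ne_of_gt h1p)
      have l1' : HasDerivAt (fun y : ℝ => 1 - y) (-1) x := by
        simpa using (hasDerivAt_id x).const_sub 1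
      have l2' := l1'.log (ne_of_gt h1m)
      have l3 : HasDerivAt (fun y : ℝ => 2*y + 2*y^3/3 + y^5) (2 + 2*x^2 + 5*x^4) x := by
        have h5 := ((hasDerivAt_pow 3 x).const_mul 2).div_const 3
        have h6 := hasDerivAt_pow 5 x
        have := (((hasDerivAt_id x).const_mul 2).add h5).add h6
        refine HasDerivAt.congr_deriv this ?_
        push_cast
        ring
      have hd := l3.sub (l2.sub l2')
      have heq2 : (2 + 2*x^2 + 5*x^4) - (1/(1+x) + 1/(1-x))
          = 2 + 2*x^2 + 5*x^4 - (1/(1+x) - (-1)/(1-x)) := by ring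
      rw [heq2]
      exact hd.hasDerivWithinAt
    · intro x hx
      rw [interior_Icc] at hx
      obtain ⟨hxa, hxb⟩ := hx
      have h1p : (0:ℝ) < 1 + x := by linarith
      have h1m : (0:ℝ) < 1 - x := by linarith
      have heq : (2 + 2*x^2 + 5*x^4) - (1/(1+x) + 1/(1-x)) = x^4*(3 - 5*x^2)/((1+x)*(1-x)) := by
        field_simp; ring
      rw [heq]
      apply div_nonneg
      · exact mul_nonneg (pow_nonneg hxa.le 4) (by nlinarith)
      · positivity
  have := hmono (Set.left_mem_Icc.2 (by norm_num)) ⟨h0, h1⟩ h0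
  simp only [] at this
  simp at this
  linarith [this]

set_option maxHeartbeats 1000000 in
lemma key_bound {s : ℝ} (hs0 : 0 < s) (hs2 : s ≤ 1/2) :
    |gluonLoopH s + 111/(2*s) - (1 - s^2/2) * Real.log s| ≤ 60 := by
  have hs4 : (0:ℝ) < 4 + s := by linarith
  set t := Real.sqrt s with ht_def
  set v := Real.sqrt (4+s) with hv_def
  have ht0 : 0 < t := Real.sqrt_pos.2 hs0
  have hv0 : 0 < v := Real.sqrt_pos.2 hs4
  have ht2 : t^2 = s := Real.sq_sqrt hs0.le
  have hv2 : v^2 = 4 + s := Real.sq_sqrt hs4.le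
  have htv : t < v := by
    rw [ht_def, hv_def]
    exact Real.sqrt_lt_sqrt hs0.le (by linarith)
  have hu0 : 0 < t/v := div_pos ht0 hv0
  have hu1 : t/v ≤ 1/2 := by
    rw [div_le_iff₀ hv0]
    nlinarith [ht2, hv2]
  have h1mu : 0 < 1 - t/v := by
    have : t/v < 1 := (div_lt_one hv0).2 htv
    linarith
  have h1pu : 0 < 1 + t/v := by linarith
  -- r bounds
  set r := Real.log (1+s) - s + s^2/2 with hr_def
  have hr0 : 0 ≤ r := by have := aux_log_lower hs0.le; rw [hr_def]; linarith
  have hr1 : r ≤ s^3/3 := by have := aux_log_upper hs0.le; rw [hr_def]; linarith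
  -- f bounds
  set f := Real.log (1+t/v) - Real.log (1-t/v) - 2*(t/v) - 2*(t/v)^3/3 with hf_def
  have hf0 : 0 ≤ f := by have := aux_atanh_lower hu0.le hu1; rw [hf_def]; linarith
  have hf1 : f ≤ (t/v)^5 := by have := aux_atanh_upper hu0.le hu1; rw [hf_def]; linarith
  -- rpow rewriting
  have hpow : (1 + 4/s) ^ ((3:ℝ)/2) = (v/t)^3 := by
    have h14 : 1 + 4/s = (v/t)^2 := by
      rw [div_pow, ht2, hv2]
      field_simp
      ring
    rw [h14, ← Real.rpow_natCast (v/t) 2, ← Real.rpow_mul (div_pos hv0 ht0).le,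
      show ((2:ℕ):ℝ) * ((3:ℝ)/2) = ((3:ℕ):ℝ) by norm_num, Real.rpow_natCast]
  -- log argument rewriting
  have harg : (v - t)/(v + t) = (1 - t/v)/(1 + t/v) := by
    rw [div_eq_div_iff (by linarith) (by positivity)]
    field_simp
  have hlogarg : Real.log ((v - t)/(v + t)) = -(2*(t/v) + 2*(t/v)^3/3 + f) := by
    rw [harg, Real.log_div (ne_of_gt h1mu) (ne_of_gt h1pu), hf_def]
    ring
  -- unfold gluonLoopH
  have hlog1s : Real.log (1+s) = s - s^2/2 + r := by rw [hr_def]; ring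
  have hgl : gluonLoopH s = -1/s^2 + (1 - s^2/2)*Real.log s
      + (1 + 1/s)^3 * (s^2 - 10*s + 1) * (s - s^2/2 + r)
      + (1/2) * (v/t)^3 * (s^2 - 20*s + 12) * (-(2*(t/v) + 2*(t/v)^3/3 + f)) := by
    rw [gluonLoopH, ← ht_def, ← hv_def, hpow, hlogarg, hlog1s]
  -- simplify the D-part
  have e1 : (v/t)^3 * (t/v) = (4+s)/s := by
    rw [← hv2, ← ht2]; field_simp
  have e3 : (v/t)^3 * (t/v)^5 = s/(4+s) := by
    rw [← hv2, ← ht2]; field_simp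
  set G := (v/t)^3 * f with hG_def
  have hG0 : 0 ≤ G := by positivity
  have hG1 : G ≤ 1/8 := by
    have h1 : G ≤ (v/t)^3 * (t/v)^5 :=
      mul_le_mul_of_nonneg_left hf1 (by positivity)
    rw [e3] at h1
    have h2 : s/(4+s) ≤ 1/8 := by
      rw [div_le_div_iff₀ hs4 (by norm_num)]
      linarith
    linarith
  have hD : (1/2) * (v/t)^3 * (s^2 - 20*s + 12) * (-(2*(t/v) + 2*(t/v)^3/3 + f))
      = -(s^2 - 20*s + 12)*((4+s)/s) - (s^2 - 20*s + 12)/3 - (s^2 - 20*s + 12)*G/2 := by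
    rw [← e1, hG_def]
    have e2 : (v/t)^3 * (t/v)^3 = 1 := by field_simp
    calc (1/2) * (v/t)^3 * (s^2 - 20*s + 12) * (-(2*(t/v) + 2*(t/v)^3/3 + f))
        = -(s^2 - 20*s + 12)*((v/t)^3*(t/v)) - ((s^2 - 20*s + 12)/3) * ((v/t)^3 * (t/v)^3)
          - (s^2 - 20*s + 12)*((v/t)^3*f)/2 := by ring
      _ = _ := by rw [e2]; ring
  rw [hgl, hD]
  -- now pure algebra in s, r, G
  set ρ := r/s^3 with hρ_def
  have hρ0 : 0 ≤ ρ := by positivity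
  have hρ1 : ρ ≤ 1/3 := by
    rw [hρ_def, div_le_iff₀ (by positivity)]
    linarith
  have hr_eq : r = ρ * s^3 := by
    rw [hρ_def]; field_simp
  clear_value t v f r G ρ
  have hmain : -1/s^2 + (1 - s^2/2)*Real.log s
      + (1 + 1/s)^3 * (s^2 - 10*s + 1) * (s - s^2/2 + r)
      + (-(s^2 - 20*s + 12)*((4+s)/s) - (s^2 - 20*s + 12)/3 - (s^2 - 20*s + 12)*G/2)
      + 111/(2*s) - (1 - s^2/2) * Real.log s
      = 83/2 + 29*s/3 + 14*s^2/3 + 9*s^3/2 - s^4/2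
        + (s+1)^3*(s^2-10*s+1)*ρ - (s^2-20*s+12)*G/2 := by
    rw [hr_eq]
    field_simp
    ring
  rw [hmain]
  clear hmain hgl hD hpow hlogarg harg hlog1s e1 e3 hr_eq hρ_def hG_def hr_def hf_def hr0 hr1 hf0 hf1 ht_def hv_def ht2 hv2 htv hu0 hu1 h1mu h1pu ht0 hv0
  clear f r t v
  -- chained powers of s bounds
  have p2 : s^2 ≤ s/2 := by nlinarith
  have p3 : s^3 ≤ s^2/2 := by nlinarith
  have p4 : s^4 ≤ s^3/2 := by nlinarith
  have hb1 : |83/2 + 29*s/3 + 14*s^2/3 + 9*s^3/2 - s^4/2| ≤ 49 := by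
    rw [abs_le]; constructor <;> nlinarith
  have hb2 : |(s+1)^3*(s^2-10*s+1)*ρ| ≤ 5 := by
    rw [abs_mul]
    have hA : |(s+1)^3*(s^2-10*s+1)| ≤ 15 := by
      rw [abs_le]
      have hexp : (s+1)^3*(s^2-10*s+1) = s^5 - 7*s^4 - 26*s^3 - 26*s^2 - 7*s + 1 := by ring
      constructor <;> nlinarith
    have hρa : |ρ| ≤ 1/3 := by rw [abs_of_nonneg hρ0]; exact hρ1
    calc |(s+1)^3*(s^2-10*s+1)| * |ρ| ≤ 15 * (1/3) := by
          apply mul_le_mul hA hρa (abs_nonneg _) (by norm_num)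
      _ = 5 := by norm_num
  have hb3 : |(s^2-20*s+12)*G/2| ≤ 2 := by
    have hQ0 : 0 < s^2 - 20*s + 12 := by nlinarith
    have hQ1 : s^2 - 20*s + 12 ≤ 13 := by nlinarith
    rw [abs_of_nonneg (by positivity)]
    have hm : (s^2-20*s+12)*G ≤ 13*(1/8) := mul_le_mul hQ1 hG1 hG0 (by norm_num)
    linarith
  calc |83/2 + 29*s/3 + 14*s^2/3 + 9*s^3/2 - s^4/2
        + (s+1)^3*(s^2-10*s+1)*ρ - (s^2-20*s+12)*G/2|
      ≤ |83/2 + 29*s/3 + 14*s^2/3 + 9*s^3/2 - s^4/2 + (s+1)^3*(s^2-10*s+1)*ρ|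
        + |(s^2-20*s+12)*G/2| := abs_sub _ _
    _ ≤ |83/2 + 29*s/3 + 14*s^2/3 + 9*s^3/2 - s^4/2| + |(s+1)^3*(s^2-10*s+1)*ρ|
        + |(s^2-20*s+12)*G/2| := by linarith [abs_add_le (83/2 + 29*s/3 + 14*s^2/3 + 9*s^3/2 - s^4/2) ((s+1)^3*(s^2-10*s+1)*ρ)]
    _ ≤ 49 + 5 + 2 := by linarith
    _ ≤ 60 := by norm_num

/-- As `s → 0⁺`, `h(s) = −111/(2s) + O(log s)`; in particular `s·h(s) → −111/2`. -/
theorem gluonLoopH_asymptotics :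
    ((fun s : ℝ => gluonLoopH s + 111 / (2 * s)) =O[𝓝[>] (0 : ℝ)] fun s => Real.log s) ∧
    Tendsto (fun s : ℝ => s * gluonLoopH s) (𝓝[>] (0 : ℝ)) (𝓝 (-111 / 2)) := by
  have hmem : Set.Ioc (0:ℝ) (1/2) ∈ 𝓝[>] (0:ℝ) :=
    Ioc_mem_nhdsGT_of_mem (by norm_num : (0:ℝ) ∈ Set.Ico 0 (1/2))
  have hlog_lb : ∀ s ∈ Set.Ioc (0:ℝ) (1/2), (1:ℝ)/2 ≤ |Real.log s| := by
    intro s hs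
    have hneg : Real.log s < 0 := Real.log_neg hs.1 (by linarith [hs.2])
    rw [abs_of_neg hneg]
    have h1 : Real.log s ≤ Real.log (1/2) := Real.log_le_log hs.1 hs.2
    have h2 : Real.log (1/2) = -Real.log 2 := by
      rw [one_div, Real.log_inv]
    have h3 : (1:ℝ)/2 ≤ Real.log 2 := by
      linarith [Real.log_two_gt_d9]
    linarith
  constructor
  · rw [isBigO_iff]
    refine ⟨121, ?_⟩
    filter_upwards [hmem] with s hs
    have hk := key_bound hs.1 hs.2
    have hlb := hlog_lb s hs
    have hcoef : |1 - s^2/2| ≤ 1 := by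
      rw [abs_le]
      constructor <;> nlinarith [hs.1, hs.2]
    rw [Real.norm_eq_abs, Real.norm_eq_abs]
    have h1 : |gluonLoopH s + 111/(2*s)|
        ≤ |gluonLoopH s + 111/(2*s) - (1 - s^2/2) * Real.log s|
          + |(1 - s^2/2) * Real.log s| := by
      have := abs_add_le (gluonLoopH s + 111/(2*s) - (1 - s^2/2) * Real.log s)
        ((1 - s^2/2) * Real.log s)
      simpa using this
    have h2 : |(1 - s^2/2) * Real.log s| ≤ |Real.log s| := by
      rw [abs_mul]
      nlinarith [abs_nonneg (Real.log s), abs_nonneg (1 - s^2/2)]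
    have h3 : (60:ℝ) ≤ 120 * |Real.log s| := by linarith
    linarith
  · have heq : ∀ᶠ s in 𝓝[>] (0:ℝ), s * (gluonLoopH s + 111/(2*s) - (1 - s^2/2)*Real.log s)
        + (s * Real.log s) * (1 - s^2/2) + (-111/2 : ℝ) = s * gluonLoopH s := by
      filter_upwards [self_mem_nhdsWithin] with s hs
      have hs0 : (0:ℝ) < s := hs
      field_simp
      ring
    apply Tendsto.congr' heq
    have t1 : Tendsto (fun s : ℝ => s * (gluonLoopH s + 111/(2*s) - (1 - s^2/2)*Real.log s))
        (𝓝[>] (0:ℝ)) (𝓝 0) := by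
      apply squeeze_zero_norm' (a := fun s : ℝ => 60 * s)
      · filter_upwards [hmem] with s hs
        have hk := key_bound hs.1 hs.2
        rw [Real.norm_eq_abs, abs_mul, abs_of_pos hs.1]
        calc s * |gluonLoopH s + 111/(2*s) - (1 - s^2/2)*Real.log s| ≤ s * 60 :=
              mul_le_mul_of_nonneg_left hk hs.1.le
          _ = 60 * s := by ring
      · have : Tendsto (fun s : ℝ => 60 * s) (𝓝 (0:ℝ)) (𝓝 (60 * 0)) :=
          (continuous_const.mul continuous_id).tendsto 0
        simpa using this.mono_left nhdsWithin_le_nhds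
    have t2 : Tendsto (fun s : ℝ => (s * Real.log s) * (1 - s^2/2)) (𝓝[>] (0:ℝ)) (𝓝 0) := by
      have ha : Tendsto (fun s : ℝ => s * Real.log s) (𝓝[>] (0:ℝ)) (𝓝 0) := by
        have := (Real.continuous_mul_log.tendsto 0).mono_left
          (nhdsWithin_le_nhds (s := Set.Ioi (0:ℝ)))
        simpa using this
      have hb : Tendsto (fun s : ℝ => 1 - s^2/2) (𝓝[>] (0:ℝ)) (𝓝 1) := by
        have : Tendsto (fun s : ℝ => 1 - s^2/2) (𝓝 (0:ℝ)) (𝓝 (1 - 0^2/2)) :=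
          (continuous_const.sub ((continuous_pow 2).div_const 2)).tendsto 0
        simpa using this.mono_left nhdsWithin_le_nhds
      simpa using ha.mul hb
    have := (t1.add t2).add (tendsto_const_nhds (x := (-111/2 : ℝ)))
    simpa using this
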